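/- Let G = ([n], E) be a graph and consider the max-min pricing instance with marginals F_1(G),...,F_n(G) defined from G. If G has an independent set S (no two vertices of S are adjacent in G), then the optimal robust revenue guarantee satisfies R*(G) ≥ (1/2)·(1 − √n / 2^{n−1})·|S|. In fact, the pricing p with p_i = 2^{i·n − 1} for i ∈ S and p_i = ∞ for i ∉ S satisfies R(p, F; G) ≥ (1/2)·(1 − √n / 2^{n−1})·|S| for every compatible joint distribution F. -/

import Mathlib

open MeasureTheory
open scoped ENNReal NNReal

noncomputable section

/-- A buyer's purchase rule for `n` items: given a valuation profile and a vector of item prices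
(in `[0,∞]`), `choose` returns the purchased item (or `none` if nothing is purchased).
The axioms say: a purchased item has a finite price and yields nonnegative utility
(`feasible`), the purchased item maximizes utility among all items (`optimal`), and the buyer
does purchase whenever some item yields nonnegative utility (`active`). Ties among
utility-maximizing items are broken according to the (fixed) rule embodied by `choose`. -/
structure BuyerRule (n : ℕ) where
  choose : (Fin n → ℝ) → (Fin n → ℝ≥0∞) → Option (Fin n)
  feasible : ∀ v p j, choose v p = some j → p j ≠ ⊤ ∧ (p j).toReal ≤ v j
  optimal : ∀ v p j k, choose v p = some j → p k ≠ ⊤ →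
      v k - (p k).toReal ≤ v j - (p j).toReal
  active : ∀ v p, (∃ k, p k ≠ ⊤ ∧ (p k).toReal ≤ v k) → (choose v p).isSome = true

/-- The seller's revenue from valuation profile `v` under pricing `p`. -/
def BuyerRule.revenue {n : ℕ} (B : BuyerRule n) (p : Fin n → ℝ≥0∞) (v : Fin n → ℝ) : ℝ≥0∞ :=
  (B.choose v p).elim 0 (fun j => p j)

/-- A joint distribution `F` on valuation profiles is compatible with the marginals `marg`
if it is a probability measure whose `j`-th one-dimensional marginal is `marg j` for every `j`. -/
def Compatible {n : ℕ} (marg : Fin n → Measure ℝ) (F : Measure (Fin n → ℝ)) : Prop :=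
  IsProbabilityMeasure F ∧ ∀ j, F.map (fun v => v j) = marg j

/-- `R(p,F)`: the expected revenue of pricing `p` under joint distribution `F`. -/
def expRev {n : ℕ} (B : BuyerRule n) (p : Fin n → ℝ≥0∞) (F : Measure (Fin n → ℝ)) : ℝ≥0∞ :=
  ∫⁻ v, B.revenue p v ∂F

/-- `R(p)`: the robust revenue guarantee of `p`, the infimum of `R(p,F)` over compatible `F`. -/
def robustRev {n : ℕ} (B : BuyerRule n) (marg : Fin n → Measure ℝ) (p : Fin n → ℝ≥0∞) : ℝ≥0∞ :=
  ⨅ (F : Measure (Fin n → ℝ)) (_ : Compatible marg F), expRev B p F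

/-- `R*`: the optimal robust revenue guarantee over all pricings. -/
def optRobust {n : ℕ} (B : BuyerRule n) (marg : Fin n → Measure ℝ) : ℝ≥0∞ :=
  ⨆ p : Fin n → ℝ≥0∞, robustRev B marg p

/-- The marginal distribution `F_i(G)` of the hardness instance built from the graph `G`
(item `i : Fin n` represents the vertex `i+1 ∈ [n]` of the paper): it takes the value
`2^((i+1)·n)` with probability `2^(-(i+1)·n)`; additionally, for each vertex `j > i` adjacent
to `i`, it takes the value `2^((j+1)·n)` with probability `2^(-(j+1)·n)/√n`; with all remaining
probability it takes the value `0`. -/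
def margG (n : ℕ) (G : SimpleGraph (Fin n)) [DecidableRel G.Adj] (i : Fin n) : Measure ℝ :=
  ENNReal.ofReal (((2 : ℝ) ^ (((i : ℕ) + 1) * n))⁻¹) •
      Measure.dirac ((2 : ℝ) ^ (((i : ℕ) + 1) * n))
    + (∑ j : Fin n,
        if i < j ∧ G.Adj i j then
          ENNReal.ofReal ((((2 : ℝ) ^ (((j : ℕ) + 1) * n))⁻¹) / Real.sqrt n) •
            Measure.dirac ((2 : ℝ) ^ (((j : ℕ) + 1) * n))
        else 0)
    + (1 - ENNReal.ofReal (((2 : ℝ) ^ (((i : ℕ) + 1) * n))⁻¹)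
        - ∑ j : Fin n,
            if i < j ∧ G.Adj i j then
              ENNReal.ofReal ((((2 : ℝ) ^ (((j : ℕ) + 1) * n))⁻¹) / Real.sqrt n)
            else 0) •
        Measure.dirac (0 : ℝ)


private lemma geom16 (N : ℕ) : ∑ t ∈ Finset.range N, ((1:ℝ)/16)^t ≤ 16/15 := by
  rw [geom_sum_eq (by norm_num : (1:ℝ)/16 ≠ 1)]
  rw [div_le_iff_of_neg (by norm_num : (1:ℝ)/16 - 1 < 0)]
  nlinarith [pow_nonneg (by norm_num : (0:ℝ) ≤ 1/16) N]

private lemma geom_aux (n : ℕ) (hn : 4 ≤ n) (j : Fin n) :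
    ∑ l ∈ Finset.univ.filter (fun l : Fin n => j < l), ((2:ℝ) ^ (((l : ℕ)+1)*n))⁻¹
      ≤ (16/15) * ((2:ℝ) ^ (((j : ℕ)+2)*n))⁻¹ := by
  have h1 : ∑ l ∈ Finset.univ.filter (fun l : Fin n => j < l), ((2:ℝ) ^ (((l : ℕ)+1)*n))⁻¹
      = ∑ t ∈ Finset.Ico ((j : ℕ)+1) n, ((2:ℝ) ^ ((t+1)*n))⁻¹ := by
    rw [Finset.sum_filter]
    have h2 := Fin.sum_univ_eq_sum_range
      (fun t : ℕ => if (j : ℕ) < t then ((2:ℝ) ^ ((t+1)*n))⁻¹ else 0) n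
    simp only [Fin.lt_def] at *
    rw [h2, ← Finset.sum_filter]
    congr 1
    ext t
    simp only [Finset.mem_filter, Finset.mem_range, Finset.mem_Ico]
    omega
  rw [h1, Finset.sum_Ico_eq_sum_range]
  have hterm : ∀ t ∈ Finset.range (n - ((j:ℕ)+1)),
      ((2:ℝ) ^ ((((j:ℕ)+1+t)+1)*n))⁻¹ ≤ ((2:ℝ) ^ (((j:ℕ)+2)*n))⁻¹ * ((1:ℝ)/16)^t := by
    intro t _
    have he : (((j:ℕ)+1+t)+1)*n = ((j:ℕ)+2)*n + t*n := by ring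
    rw [he, pow_add, mul_inv]
    have h16 : ((1:ℝ)/16)^t = ((2:ℝ) ^ (4*t))⁻¹ := by
      rw [pow_mul, one_div, ← inv_pow]; norm_num
    rw [h16]
    have hle : (2:ℝ)^(4*t) ≤ 2^(t*n) := by
      apply pow_le_pow_right₀ one_le_two
      calc 4*t = t*4 := by ring
        _ ≤ t*n := Nat.mul_le_mul_left t hn
    have h0 : (0:ℝ) ≤ (2 ^ (((j:ℕ)+2)*n))⁻¹ := by positivity
    exact mul_le_mul_of_nonneg_left (inv_anti₀ (by positivity) hle) h0
  calc ∑ t ∈ Finset.range (n - ((j:ℕ)+1)), ((2:ℝ) ^ ((((j:ℕ)+1+t)+1)*n))⁻¹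
      ≤ ∑ t ∈ Finset.range (n - ((j:ℕ)+1)), ((2:ℝ) ^ (((j:ℕ)+2)*n))⁻¹ * ((1:ℝ)/16)^t :=
        Finset.sum_le_sum hterm
    _ = ((2:ℝ) ^ (((j:ℕ)+2)*n))⁻¹ * ∑ t ∈ Finset.range (n - ((j:ℕ)+1)), ((1:ℝ)/16)^t := by
        rw [Finset.mul_sum]
    _ ≤ ((2:ℝ) ^ (((j:ℕ)+2)*n))⁻¹ * (16/15) := by
        gcongr
        · exact geom16 _
    _ = (16/15) * ((2:ℝ) ^ (((j:ℕ)+2)*n))⁻¹ := mul_comm _ _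

private def aV (n : ℕ) (l : Fin n) : ℝ := (2:ℝ) ^ (((l : ℕ)+1)*n)

private lemma aV_pos (n : ℕ) (l : Fin n) : 0 < aV n l := by unfold aV; positivity

private lemma aV_inj (n : ℕ) (hn : 0 < n) {k l : Fin n} (h : aV n k = aV n l) : k = l := by
  unfold aV at h
  have h2 := (pow_right_strictMono₀ (one_lt_two : (1:ℝ) < 2)).injective h
  have h3 : (k : ℕ) + 1 = (l : ℕ) + 1 := Nat.eq_of_mul_eq_mul_right hn h2
  exact Fin.ext (by omega)

private lemma dirac_singleton_ne {x y : ℝ} (h : y ≠ x) : Measure.dirac x {y} = 0 := by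
  rw [Measure.dirac_apply' _ (measurableSet_singleton y)]
  exact Set.indicator_of_notMem (by simpa using h.symm) 1

private lemma margG_self (n : ℕ) (hn : 0 < n) (G : SimpleGraph (Fin n)) [DecidableRel G.Adj]
    (k : Fin n) : margG n G k {aV n k} = ENNReal.ofReal ((aV n k)⁻¹) := by
  classical
  simp only [margG, aV]
  rw [Measure.add_apply, Measure.add_apply, Measure.smul_apply, Measure.smul_apply,
    Measure.finset_sum_apply]
  rw [Measure.dirac_apply_of_mem (Set.mem_singleton _)]
  rw [dirac_singleton_ne (by positivity : (2:ℝ) ^ (((k : ℕ)+1)*n) ≠ 0)]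
  have hz : ∀ j : Fin n,
      ((if k < j ∧ G.Adj k j then
          ENNReal.ofReal (((2 : ℝ) ^ (((j : ℕ) + 1) * n))⁻¹ / Real.sqrt n) •
            Measure.dirac ((2 : ℝ) ^ (((j : ℕ) + 1) * n))
        else 0) : Measure ℝ) {(2 : ℝ) ^ (((k : ℕ) + 1) * n)} = 0 := by
    intro j
    split_ifs with h
    · rw [Measure.smul_apply, dirac_singleton_ne, smul_zero]
      intro he
      exact absurd (aV_inj n hn (show aV n j = aV n k from he.symm)) (ne_of_gt h.1)
    · simp
  rw [Finset.sum_congr rfl (fun j _ => hz j), Finset.sum_const_zero]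
  simp

private lemma margG_other (n : ℕ) (hn : 0 < n) (G : SimpleGraph (Fin n)) [DecidableRel G.Adj]
    {k l : Fin n} (hkl : k ≠ l) :
    margG n G k {aV n l} ≤ ENNReal.ofReal ((aV n l)⁻¹ / Real.sqrt n) := by
  classical
  simp only [margG, aV]
  rw [Measure.add_apply, Measure.add_apply, Measure.smul_apply, Measure.smul_apply,
    Measure.finset_sum_apply]
  have hne1 : ((2:ℝ) ^ (((l:ℕ)+1)*n)) ≠ ((2:ℝ) ^ (((k:ℕ)+1)*n)) :=
    fun he => hkl (aV_inj n hn (show aV n k = aV n l from he.symm))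
  rw [dirac_singleton_ne hne1]
  rw [dirac_singleton_ne (by positivity : (2:ℝ) ^ (((l : ℕ)+1)*n) ≠ 0)]
  have hz : ∀ j : Fin n, j ≠ l →
      ((if k < j ∧ G.Adj k j then
          ENNReal.ofReal (((2 : ℝ) ^ (((j : ℕ) + 1) * n))⁻¹ / Real.sqrt n) •
            Measure.dirac ((2 : ℝ) ^ (((j : ℕ) + 1) * n))
        else 0) : Measure ℝ) {(2 : ℝ) ^ (((l : ℕ) + 1) * n)} = 0 := by
    intro j hjl
    split_ifs with h
    · rw [Measure.smul_apply, dirac_singleton_ne, smul_zero]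
      exact fun he => hjl (aV_inj n hn (show aV n j = aV n l from he.symm))
    · simp
  rw [Finset.sum_eq_single_of_mem l (Finset.mem_univ l) (fun b _ hb => hz b hb)]
  simp only [smul_zero, zero_add, add_zero, smul_eq_mul, mul_zero]
  split_ifs with h
  · rw [Measure.smul_apply, Measure.dirac_apply_of_mem (Set.mem_singleton _), smul_eq_mul, mul_one]
  · simp



private lemma W_meas (n : ℕ) (G : SimpleGraph (Fin n)) [DecidableRel G.Adj] (k : Fin n) :
    MeasurableSet {x : ℝ | x = 0 ∨ x = aV n k ∨ ∃ l : Fin n, (k < l ∧ G.Adj k l) ∧ x = aV n l} := by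
  have he : {x : ℝ | x = 0 ∨ x = aV n k ∨ ∃ l : Fin n, (k < l ∧ G.Adj k l) ∧ x = aV n l}
      = insert (0:ℝ) (insert (aV n k)
          (⋃ l : Fin n, ⋃ (_ : k < l ∧ G.Adj k l), {aV n l})) := by
    ext x
    simp only [Set.mem_setOf_eq, Set.mem_insert_iff, Set.mem_iUnion, Set.mem_singleton_iff,
      exists_prop]
  rw [he]
  exact ((MeasurableSet.iUnion fun l => MeasurableSet.iUnion fun _ =>
    measurableSet_singleton _).insert _).insert _

private lemma margG_supp (n : ℕ) (G : SimpleGraph (Fin n)) [DecidableRel G.Adj] (k : Fin n) :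
    margG n G k
      {x : ℝ | x = 0 ∨ x = aV n k ∨ ∃ l : Fin n, (k < l ∧ G.Adj k l) ∧ x = aV n l}ᶜ = 0 := by
  classical
  set W : Set ℝ := {x : ℝ | x = 0 ∨ x = aV n k ∨ ∃ l : Fin n, (k < l ∧ G.Adj k l) ∧ x = aV n l}
    with hW
  have hWm := W_meas n G k
  have hdir : ∀ x : ℝ, x ∈ W → Measure.dirac x Wᶜ = 0 := by
    intro x hx
    rw [Measure.dirac_apply' _ hWm.compl]
    exact Set.indicator_of_notMem (by simp only [Set.mem_compl_iff, not_not]; exact hx) 1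
  simp only [margG]
  rw [Measure.add_apply, Measure.add_apply, Measure.smul_apply, Measure.smul_apply,
    Measure.finset_sum_apply]
  rw [hdir _ (by exact Or.inr (Or.inl rfl)), hdir 0 (Or.inl rfl)]
  have hz : ∀ j : Fin n,
      ((if k < j ∧ G.Adj k j then
          ENNReal.ofReal (((2 : ℝ) ^ (((j : ℕ) + 1) * n))⁻¹ / Real.sqrt n) •
            Measure.dirac ((2 : ℝ) ^ (((j : ℕ) + 1) * n))
        else 0) : Measure ℝ) Wᶜ = 0 := by
    intro j
    split_ifs with h
    · have hmem : ((2:ℝ) ^ (((j : ℕ)+1)*n)) ∈ W := Or.inr (Or.inr ⟨j, h, rfl⟩)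
      rw [Measure.smul_apply, hdir _ hmem, smul_zero]
    · simp
  rw [Finset.sum_congr rfl (fun j _ => hz j), Finset.sum_const_zero]
  simp


private lemma pow_half (m : ℕ) (hm : 1 ≤ m) : (2:ℝ)^(m-1) * ((2:ℝ)^m)⁻¹ = 1/2 := by
  have h : (2:ℝ)^m = 2^(m-1) * 2 := by rw [← pow_succ]; congr 1; omega
  rw [h, mul_inv, ← mul_assoc, mul_inv_cancel₀ (by positivity), one_mul]
  norm_num

private lemma t_nonneg (n : ℕ) (hn : 0 < n) :
    0 ≤ (1/2 : ℝ) * (1 - Real.sqrt n / 2^(n-1)) := by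
  have hnat : n ≤ 2^(n-1) := by have := Nat.lt_two_pow_self (n := n-1); omega
  have h2 : (n:ℝ) ≤ ((2:ℝ)^(n-1))^2 := by
    have hnat2 : n ≤ (2^(n-1))^2 := by
      have h0 : 0 < 2^(n-1) := Nat.two_pow_pos (n-1)
      calc n ≤ 2^(n-1) := hnat
        _ = 2^(n-1) * 1 := (mul_one _).symm
        _ ≤ 2^(n-1) * 2^(n-1) := Nat.mul_le_mul_left _ h0
        _ = (2^(n-1))^2 := (sq _).symm
    exact_mod_cast hnat2
  have h1 : Real.sqrt n ≤ 2^(n-1) := by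
    calc Real.sqrt n ≤ Real.sqrt (((2:ℝ)^(n-1))^2) := Real.sqrt_le_sqrt h2
      _ = 2^(n-1) := Real.sqrt_sq (by positivity)
  have hp : (0:ℝ) < 2^(n-1) := by positivity
  have h4 : Real.sqrt n / 2^(n-1) ≤ 1 := by rw [div_le_one hp]; exact h1
  linarith

private lemma real_core (n : ℕ) (hn4 : 4 ≤ n) (j card : ℕ) (hcard : card ≤ n) (R : ℝ)
    (hR0 : 0 ≤ R) (hRb : R ≤ 16/15 * ((2:ℝ)^((j+2)*n))⁻¹) :
    (1/2 : ℝ) * (1 - Real.sqrt n / 2^(n-1))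
      + (2:ℝ)^((j+1)*n - 1) * ((card:ℝ) * (R / Real.sqrt n) + R) ≤ 1/2 := by
  have hn0 : (0:ℝ) < n := by positivity
  set s := Real.sqrt n with hsdef
  have hs2 : 2 ≤ s := by
    have h := Real.sqrt_le_sqrt (show (4:ℝ) ≤ n by exact_mod_cast hn4)
    rwa [show (4:ℝ) = 2^2 by norm_num, Real.sqrt_sq (by norm_num : (0:ℝ) ≤ 2)] at h
  have hs0 : 0 < s := lt_of_lt_of_le two_pos hs2
  have hss : s * s = n := Real.mul_self_sqrt (le_of_lt hn0)
  set P : ℝ := 2^(n-1) with hPdef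
  have hP0 : 0 < P := by positivity
  have hQ : (2:ℝ)^((j+1)*n - 1) * ((2:ℝ)^((j+2)*n))⁻¹ = (P*4)⁻¹ := by
    have h1 : 1 ≤ (j+1)*n := Nat.mul_pos (Nat.succ_pos j) (by omega)
    have he : (j+2)*n = ((j+1)*n - 1) + (n + 1) := by
      have h2 : (j+2)*n = (j+1)*n + n := by ring
      omega
    rw [he, pow_add, mul_inv, ← mul_assoc, mul_inv_cancel₀ (by positivity), one_mul]
    have h3 : (2:ℝ)^(n+1) = P * 4 := by
      rw [hPdef, show n + 1 = (n-1) + 2 by omega, pow_add]; norm_num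
    rw [h3]
  have hstep : (2:ℝ)^((j+1)*n-1) * ((card:ℝ)*(R/s) + R) ≤ (s+1) * (16/15) * (P*4)⁻¹ := by
    have hc : (card:ℝ) ≤ n := by exact_mod_cast hcard
    have h5 : (card:ℝ)/s ≤ s := by rw [div_le_iff₀ hs0]; nlinarith
    have h1 : (card:ℝ)*(R/s) + R ≤ (s+1) * R := by
      have h2 : (card:ℝ)*(R/s) = ((card:ℝ)/s)*R := by ring
      nlinarith [mul_le_mul_of_nonneg_right h5 hR0]
    calc (2:ℝ)^((j+1)*n-1) * ((card:ℝ)*(R/s)+R)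
        ≤ (2:ℝ)^((j+1)*n-1) * ((s+1)*R) :=
          mul_le_mul_of_nonneg_left h1 (by positivity)
      _ ≤ (2:ℝ)^((j+1)*n-1) * ((s+1) * (16/15 * ((2:ℝ)^((j+2)*n))⁻¹)) :=
          mul_le_mul_of_nonneg_left (mul_le_mul_of_nonneg_left hRb (by positivity)) (by positivity)
      _ = (s+1) * (16/15) * ((2:ℝ)^((j+1)*n-1) * ((2:ℝ)^((j+2)*n))⁻¹) := by ring
      _ = (s+1) * (16/15) * (P*4)⁻¹ := by rw [hQ]
  have hfin : (s+1)*(16/15)*(P*4)⁻¹ ≤ s/(2*P) := by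
    have he : (s+1)*(16/15)*(P*4)⁻¹ = ((s+1)*(16/15))/(P*4) := by ring
    rw [he, div_le_div_iff₀ (by positivity) (by positivity)]
    nlinarith [hP0, hs2, mul_le_mul_of_nonneg_right hs2 (le_of_lt hP0)]
  have ht : (1/2 : ℝ)*(1 - s/P) = 1/2 - s/(2*P) := by field_simp
  linarith

/-- If the graph `G` has an independent set `S`, then for the hardness
instance with marginals `F_i(G)`, the pricing `p` with `p i = 2^((i+1)·n − 1)` for `i ∈ S` and
`p i = ∞` for `i ∉ S` satisfies `R(p,F;G) ≥ (1/2)·(1 − √n/2^(n−1))·|S|` for every compatible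
joint distribution `F`; consequently `R*(G) ≥ (1/2)·(1 − √n/2^(n−1))·|S|`. -/
theorem independent_set_gives_robust_revenue_lower_bound
    (n : ℕ) (hn : 0 < n) (hsq : ∃ m : ℕ, n = m * m)
    (G : SimpleGraph (Fin n)) [DecidableRel G.Adj]
    (B : BuyerRule n)
    (S : Finset (Fin n)) (hS : ∀ i ∈ S, ∀ j ∈ S, ¬ G.Adj i j)
    (p : Fin n → ℝ≥0∞)
    (hp : ∀ i : Fin n,
      p i = if i ∈ S then ENNReal.ofReal ((2 : ℝ) ^ (((i : ℕ) + 1) * n - 1)) else ⊤) :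
    (∀ F : Measure (Fin n → ℝ), Compatible (margG n G) F →
        ENNReal.ofReal ((1 / 2) * (1 - Real.sqrt n / 2 ^ (n - 1)) * S.card) ≤ expRev B p F) ∧
    ENNReal.ofReal ((1 / 2) * (1 - Real.sqrt n / 2 ^ (n - 1)) * S.card) ≤
      optRobust B (margG n G) := by
  classical
  have main : ∀ F : Measure (Fin n → ℝ), Compatible (margG n G) F →
      ENNReal.ofReal ((1 / 2) * (1 - Real.sqrt n / 2 ^ (n - 1)) * S.card) ≤ expRev B p F := by
    intro F hF
    obtain ⟨m0, hm0⟩ := hsq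
    rcases le_or_gt n 1 with hn1 | hn1
    · have hn1' : n = 1 := le_antisymm hn1 hn
      have hz : (1 : ℝ) - Real.sqrt n / 2 ^ (n - 1) = 0 := by
        rw [hn1']; norm_num
      rw [hz]
      simp
    · -- n is a perfect square ≥ 2, hence ≥ 4
      have hm2 : 2 ≤ m0 := by
        by_contra h
        push_neg at h
        interval_cases m0 <;> omega
      have hn4 : 4 ≤ n := by
        calc 4 = 2*2 := rfl
          _ ≤ m0*m0 := Nat.mul_le_mul hm2 hm2
          _ = n := hm0.symm
      obtain ⟨hFprob, hFmap⟩ := hF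
      set s : ℝ := Real.sqrt n with hsdef
      -- the sets
      set E : Fin n → Set (Fin n → ℝ) := fun k => (fun v => v k) ⁻¹' {aV n k} with hE
      set W : Fin n → Set ℝ := fun k =>
        {x : ℝ | x = 0 ∨ x = aV n k ∨ ∃ l : Fin n, (k < l ∧ G.Adj k l) ∧ x = aV n l} with hWdef
      set A : Set (Fin n → ℝ) := ⋂ k, (fun v => v k) ⁻¹' (W k) with hA
      set D : Fin n → Set (Fin n → ℝ) := fun j =>
        ⋃ k ∈ S, ⋃ l ∈ Finset.univ.filter (fun l : Fin n => k < l ∧ j < l),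
          (fun v => v k) ⁻¹' {aV n l} with hD
      set X4 : Fin n → Set (Fin n → ℝ) := fun j =>
        ⋂ k ∈ S.filter (fun k => j < k), (E k)ᶜ with hX4
      set Gs : Fin n → Set (Fin n → ℝ) := fun j => E j ∩ A ∩ (D j)ᶜ ∩ X4 j with hGs
      -- measurability
      have hEm : ∀ k, MeasurableSet (E k) :=
        fun k => (measurableSet_singleton _).preimage (measurable_pi_apply k)
      have hGm : ∀ j, MeasurableSet (Gs j) := by
        intro j
        refine (((hEm j).inter ?_).inter ?_).inter ?_
        · exact MeasurableSet.iInter fun k => (W_meas n G k).preimage (measurable_pi_apply k)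
        · refine (MeasurableSet.iUnion fun k => MeasurableSet.iUnion fun _ =>
            MeasurableSet.iUnion fun l => MeasurableSet.iUnion fun _ =>
            (measurableSet_singleton _).preimage (measurable_pi_apply k)).compl
        · exact MeasurableSet.iInter fun k => MeasurableSet.iInter fun _ => (hEm k).compl
      -- marginal computations
      have hFco : ∀ (k : Fin n) (T : Set ℝ), MeasurableSet T →
          F ((fun v => v k) ⁻¹' T) = margG n G k T := by
        intro k T hT
        rw [← Measure.map_apply (measurable_pi_apply k) hT, hFmap k]
      have hFE : ∀ k, F (E k) = ENNReal.ofReal ((aV n k)⁻¹) := by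
        intro k
        rw [hE]
        rw [hFco k {aV n k} (measurableSet_singleton _)]
        exact margG_self n hn G k
      have hFA : F Aᶜ = 0 := by
        rw [hA, Set.compl_iInter]
        refine measure_iUnion_null fun k => ?_
        rw [← Set.preimage_compl, hFco k _ (W_meas n G k).compl]
        exact margG_supp n G k
      have hFD : ∀ j : Fin n, F (D j) ≤ (S.card : ℝ≥0∞) *
          ∑ l ∈ Finset.univ.filter (fun l : Fin n => j < l), ENNReal.ofReal ((aV n l)⁻¹ / s) := by
        intro j
        calc F (D j) ≤ ∑ k ∈ S, F (⋃ l ∈ Finset.univ.filter (fun l : Fin n => k < l ∧ j < l),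
              (fun v => v k) ⁻¹' {aV n l}) := measure_biUnion_finset_le _ _
          _ ≤ ∑ k ∈ S, ∑ l ∈ Finset.univ.filter (fun l : Fin n => j < l),
              ENNReal.ofReal ((aV n l)⁻¹ / s) := by
            refine Finset.sum_le_sum fun k _ => ?_
            calc F (⋃ l ∈ Finset.univ.filter (fun l : Fin n => k < l ∧ j < l),
                  (fun v => v k) ⁻¹' {aV n l})
                ≤ ∑ l ∈ Finset.univ.filter (fun l : Fin n => k < l ∧ j < l),
                  F ((fun v => v k) ⁻¹' {aV n l}) := measure_biUnion_finset_le _ _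
              _ ≤ ∑ l ∈ Finset.univ.filter (fun l : Fin n => k < l ∧ j < l),
                  ENNReal.ofReal ((aV n l)⁻¹ / s) := by
                  refine Finset.sum_le_sum fun l hl => ?_
                  have hkl : k ≠ l := ne_of_lt (Finset.mem_filter.mp hl).2.1
                  rw [hFco k _ (measurableSet_singleton _)]
                  exact margG_other n hn G hkl
              _ ≤ ∑ l ∈ Finset.univ.filter (fun l : Fin n => j < l),
                  ENNReal.ofReal ((aV n l)⁻¹ / s) := by
                  refine Finset.sum_le_sum_of_subset ?_
                  intro x hx
                  simp only [Finset.mem_filter, Finset.mem_univ, true_and] at *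
                  exact hx.2
          _ = (S.card : ℝ≥0∞) * ∑ l ∈ Finset.univ.filter (fun l : Fin n => j < l),
              ENNReal.ofReal ((aV n l)⁻¹ / s) := by
            rw [Finset.sum_const, nsmul_eq_mul]
      -- the inclusion
      have hsub : ∀ j ∈ S, E j ⊆ Gs j ∪ (Aᶜ ∪ (D j ∪
          ⋃ k ∈ S.filter (fun k => j < k), E k)) := by
        intro j hj v hv
        by_cases h1 : v ∈ A
        swap
        · exact Or.inr (Or.inl h1)
        by_cases h2 : v ∈ D j
        · exact Or.inr (Or.inr (Or.inl h2))
        by_cases h3 : v ∈ X4 j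
        · exact Or.inl ⟨⟨⟨hv, h1⟩, h2⟩, h3⟩
        · right; right; right
          rw [hX4] at h3
          simp only [Set.mem_iInter, Set.mem_compl_iff, not_forall, not_not] at h3
          obtain ⟨k, hk, hvk⟩ := h3
          exact Set.mem_iUnion.mpr ⟨k, Set.mem_iUnion.mpr ⟨hk, hvk⟩⟩
      -- key per-vertex measure inequality
      have hkey : ∀ j ∈ S, ENNReal.ofReal ((1/2 : ℝ) * (1 - s / 2^(n-1))) ≤ p j * F (Gs j) := by
        intro j hj
        have hm1 : 1 ≤ ((j:ℕ)+1)*n := Nat.mul_pos (Nat.succ_pos _) hn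
        have hpj : p j = ENNReal.ofReal ((2:ℝ)^(((j:ℕ)+1)*n - 1)) := by
          rw [hp j, if_pos hj]
        set R : ℝ := ∑ l ∈ Finset.univ.filter (fun l : Fin n => j < l),
          ((2:ℝ)^(((l : ℕ)+1)*n))⁻¹ with hRdef
        have hR0 : 0 ≤ R := Finset.sum_nonneg fun l _ => by positivity
        have hRb : R ≤ 16/15 * ((2:ℝ)^(((j:ℕ)+2)*n))⁻¹ := geom_aux n hn4 j
        set Xe : ℝ≥0∞ := (S.card : ℝ≥0∞) *
            (∑ l ∈ Finset.univ.filter (fun l : Fin n => j < l), ENNReal.ofReal ((aV n l)⁻¹ / s))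
          + ∑ k ∈ Finset.univ.filter (fun k : Fin n => j < k), ENNReal.ofReal ((aV n k)⁻¹)
          with hXedef
        have hq : ENNReal.ofReal ((aV n j)⁻¹) ≤ F (Gs j) + Xe := by
          rw [← hFE j]
          have hU : F (⋃ k ∈ S.filter (fun k => j < k), E k) ≤
              ∑ k ∈ Finset.univ.filter (fun k : Fin n => j < k), ENNReal.ofReal ((aV n k)⁻¹) := by
            calc F (⋃ k ∈ S.filter (fun k => j < k), E k)
                ≤ ∑ k ∈ S.filter (fun k => j < k), F (E k) := measure_biUnion_finset_le _ _
              _ = ∑ k ∈ S.filter (fun k => j < k), ENNReal.ofReal ((aV n k)⁻¹) :=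
                  Finset.sum_congr rfl fun k _ => hFE k
              _ ≤ ∑ k ∈ Finset.univ.filter (fun k : Fin n => j < k),
                  ENNReal.ofReal ((aV n k)⁻¹) := by
                  refine Finset.sum_le_sum_of_subset ?_
                  intro x hx
                  simp only [Finset.mem_filter, Finset.mem_univ, true_and] at *
                  exact hx.2
          calc F (E j) ≤ F (Gs j ∪ (Aᶜ ∪ (D j ∪ ⋃ k ∈ S.filter (fun k => j < k), E k))) :=
                measure_mono (hsub j hj)
            _ ≤ F (Gs j) + F (Aᶜ ∪ (D j ∪ ⋃ k ∈ S.filter (fun k => j < k), E k)) :=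
                measure_union_le _ _
            _ ≤ F (Gs j) + (F Aᶜ + F (D j ∪ ⋃ k ∈ S.filter (fun k => j < k), E k)) :=
                add_le_add_right (measure_union_le _ _) _
            _ ≤ F (Gs j) + (F Aᶜ + (F (D j) + F (⋃ k ∈ S.filter (fun k => j < k), E k))) :=
                add_le_add_right (add_le_add_right (measure_union_le _ _) _) _
            _ = F (Gs j) + (F (D j) + F (⋃ k ∈ S.filter (fun k => j < k), E k)) := by
                rw [hFA, zero_add]
            _ ≤ F (Gs j) + Xe := add_le_add_right (add_le_add (hFD j) hU) _
        -- identify Xe with a real number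
        have hs0 : (0:ℝ) < s := by
          rw [hsdef]
          exact Real.sqrt_pos.mpr (by positivity)
        have hCj : (∑ l ∈ Finset.univ.filter (fun l : Fin n => j < l),
            ENNReal.ofReal ((aV n l)⁻¹ / s)) = ENNReal.ofReal (R / s) := by
          rw [← ENNReal.ofReal_sum_of_nonneg
            (fun l _ => div_nonneg (inv_nonneg.mpr (aV_pos n l).le) hs0.le)]
          congr 1
          rw [hRdef, ← Finset.sum_div]
          congr 1
        have hQj : (∑ k ∈ Finset.univ.filter (fun k : Fin n => j < k),
            ENNReal.ofReal ((aV n k)⁻¹)) = ENNReal.ofReal R := by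
          rw [← ENNReal.ofReal_sum_of_nonneg (fun l _ => inv_nonneg.mpr (aV_pos n l).le)]
          congr 1
        have hXe : Xe = ENNReal.ofReal ((S.card : ℝ) * (R / s) + R) := by
          rw [hXedef, hCj, hQj, ← ENNReal.ofReal_natCast S.card,
            ← ENNReal.ofReal_mul (Nat.cast_nonneg S.card),
            ← ENNReal.ofReal_add
              (mul_nonneg (Nat.cast_nonneg S.card) (div_nonneg hR0 hs0.le)) hR0]
        have hXetop : p j * Xe ≠ ⊤ := by
          rw [hXe, hpj, ← ENNReal.ofReal_mul (by positivity : (0:ℝ) ≤ 2^(((j:ℕ)+1)*n - 1))]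
          exact ENNReal.ofReal_ne_top
        have hhalf : p j * ENNReal.ofReal ((aV n j)⁻¹) = ENNReal.ofReal (1/2 : ℝ) := by
          rw [hpj, ← ENNReal.ofReal_mul (by positivity)]
          congr 1
          show (2:ℝ)^(((j:ℕ)+1)*n - 1) * ((2:ℝ)^(((j:ℕ)+1)*n))⁻¹ = 1/2
          exact pow_half _ hm1
        have hnum : ENNReal.ofReal ((1/2 : ℝ) * (1 - s / 2^(n-1))) + p j * Xe ≤
            ENNReal.ofReal (1/2 : ℝ) := by
          have hb0 : (0:ℝ) ≤ (2:ℝ)^(((j:ℕ)+1)*n - 1) := by positivity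
          have hc0 : (0:ℝ) ≤ (S.card : ℝ) * (R / s) + R :=
            add_nonneg (mul_nonneg (Nat.cast_nonneg _) (div_nonneg hR0 hs0.le)) hR0
          rw [hXe, hpj, ← ENNReal.ofReal_mul hb0,
            ← ENNReal.ofReal_add (by rw [hsdef]; exact t_nonneg n hn) (mul_nonneg hb0 hc0)]
          apply ENNReal.ofReal_le_ofReal
          exact real_core n hn4 (j:ℕ) S.card (by simpa using (Finset.card_le_univ S)) R hR0 hRb
        have hchain : ENNReal.ofReal ((1/2 : ℝ) * (1 - s / 2^(n-1))) + p j * Xe ≤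
            p j * F (Gs j) + p j * Xe := by
          calc ENNReal.ofReal ((1/2 : ℝ) * (1 - s / 2^(n-1))) + p j * Xe
              ≤ ENNReal.ofReal (1/2 : ℝ) := hnum
            _ = p j * ENNReal.ofReal ((aV n j)⁻¹) := hhalf.symm
            _ ≤ p j * (F (Gs j) + Xe) := mul_le_mul_right hq _
            _ = p j * F (Gs j) + p j * Xe := mul_add _ _ _
        exact (ENNReal.add_le_add_iff_right hXetop).mp hchain
      -- pointwise revenue bound
      have hpoint : ∀ j ∈ S, ∀ v ∈ Gs j, p j ≤ B.revenue p v := by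
        intro j hj v hv
        obtain ⟨⟨⟨hvE, hvA⟩, hvD⟩, hvX⟩ := hv
        have hvj : v j = aV n j := hvE
        have hm1 : 1 ≤ ((j:ℕ)+1)*n := Nat.mul_pos (Nat.succ_pos _) hn
        have hpj : p j = ENNReal.ofReal ((2:ℝ)^(((j:ℕ)+1)*n - 1)) := by
          rw [hp j, if_pos hj]
        have hpjne : p j ≠ ⊤ := by rw [hpj]; exact ENNReal.ofReal_ne_top
        have hpjval : (p j).toReal = (2:ℝ)^(((j:ℕ)+1)*n - 1) := by
          rw [hpj, ENNReal.toReal_ofReal (by positivity)]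
        have hsplitj : (2:ℝ)^(((j:ℕ)+1)*n) = 2^(((j:ℕ)+1)*n - 1) * 2 := by
          rw [← pow_succ]
          congr 1
          omega
        have hactive := B.active v p ⟨j, hpjne, by
          rw [hpjval, hvj]
          show (2:ℝ)^(((j:ℕ)+1)*n - 1) ≤ (2:ℝ)^(((j:ℕ)+1)*n)
          exact pow_le_pow_right₀ one_le_two (Nat.sub_le _ _)⟩
        obtain ⟨k, hck⟩ := Option.isSome_iff_exists.mp hactive
        have hrev : B.revenue p v = p k := by simp [BuyerRule.revenue, hck]
        obtain ⟨hkne, hkval⟩ := B.feasible v p k hck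
        have hkS : k ∈ S := by
          by_contra hkS
          rw [hp k, if_neg hkS] at hkne
          exact hkne rfl
        have hmk1 : 1 ≤ ((k:ℕ)+1)*n := Nat.mul_pos (Nat.succ_pos _) hn
        have hpk : p k = ENNReal.ofReal ((2:ℝ)^(((k:ℕ)+1)*n - 1)) := by
          rw [hp k, if_pos hkS]
        have hpkval : (p k).toReal = (2:ℝ)^(((k:ℕ)+1)*n - 1) := by
          rw [hpk, ENNReal.toReal_ofReal (by positivity)]
        have hsplitk : (2:ℝ)^(((k:ℕ)+1)*n) = 2^(((k:ℕ)+1)*n - 1) * 2 := by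
          rw [← pow_succ]
          congr 1
          omega
        have hpkpos : (0:ℝ) < 2^(((k:ℕ)+1)*n - 1) := by positivity
        have hopt := B.optimal v p k j hck hpjne
        rw [hvj, hpjval, hpkval] at hopt
        have hWvk : v k ∈ W k := by
          rw [hA] at hvA
          exact Set.mem_iInter.mp hvA k
        rw [hWdef] at hWvk
        rcases hWvk with h0 | hself | ⟨l, hcond, hkl⟩
        · exfalso
          rw [hpkval, h0] at hkval
          linarith
        · -- own value
          rw [hself] at hopt
          have haj : aV n j = (2:ℝ)^(((j:ℕ)+1)*n) := rfl
          have hak : aV n k = (2:ℝ)^(((k:ℕ)+1)*n) := rfl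
          rw [haj, hak] at hopt
          have h1 : (2:ℝ)^(((j:ℕ)+1)*n - 1) ≤ 2^(((k:ℕ)+1)*n - 1) := by
            rw [hsplitj, hsplitk] at hopt
            linarith
          have h2 : ((j:ℕ)+1)*n - 1 ≤ ((k:ℕ)+1)*n - 1 := by
            by_contra hc
            push_neg at hc
            have := pow_lt_pow_right₀ (one_lt_two : (1:ℝ) < 2) hc
            linarith
          rw [hrev, hpk, hpj]
          exact ENNReal.ofReal_le_ofReal (pow_le_pow_right₀ one_le_two h2)
        · -- contaminated value
          have hlnS : l ∉ S := fun hlS => hS k hkS l hlS hcond.2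
          by_cases hjl : j < l
          · exfalso
            apply hvD
            rw [hD]
            refine Set.mem_iUnion.mpr ⟨k, Set.mem_iUnion.mpr ⟨hkS,
              Set.mem_iUnion.mpr ⟨l, Set.mem_iUnion.mpr ⟨?_, hkl⟩⟩⟩⟩
            simp only [Finset.mem_filter, Finset.mem_univ, true_and]
            exact ⟨hcond.1, hjl⟩
          · exfalso
            have hlj : l < j := lt_of_le_of_ne (not_lt.mp hjl) (fun he => hlnS (he ▸ hj))
            rw [hkl] at hopt
            have hl1 : ((l:ℕ)+1) ≤ (j:ℕ) := hlj
            have h1 : aV n l ≤ (2:ℝ)^(((j:ℕ)+1)*n - 1) := by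
              show (2:ℝ)^(((l:ℕ)+1)*n) ≤ 2^(((j:ℕ)+1)*n - 1)
              apply pow_le_pow_right₀ one_le_two
              have h2 : ((l:ℕ)+1)*n ≤ (j:ℕ)*n := Nat.mul_le_mul_right n hl1
              have h3 : ((j:ℕ)+1)*n = (j:ℕ)*n + n := by ring
              omega
            have haj : aV n j = (2:ℝ)^(((j:ℕ)+1)*n) := rfl
            rw [haj] at hopt
            rw [hsplitj] at hopt
            linarith
      -- disjointness and integral bound
      have hfun : ∀ v, ∑ j ∈ S, (Gs j).indicator (fun _ => p j) v ≤ B.revenue p v := by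
        intro v
        by_cases hex : ∃ j ∈ S, v ∈ Gs j
        · obtain ⟨j0, hj0, hvj0⟩ := hex
          have hz : ∀ b ∈ S, b ≠ j0 → (Gs b).indicator (fun _ => p b) v = 0 := by
            intro b hb hbne
            rw [Set.indicator_of_notMem]
            intro hvb
            rcases lt_or_gt_of_ne hbne with hlt | hgt
            · -- b < j0, v ∈ Gs b excludes E j0
              have hX := hvb.2
              rw [hX4] at hX
              have := Set.mem_iInter.mp hX j0
              have h2 := Set.mem_iInter.mp this (Finset.mem_filter.mpr ⟨hj0, hlt⟩)
              exact h2 hvj0.1.1.1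
            · have hX := hvj0.2
              rw [hX4] at hX
              have := Set.mem_iInter.mp hX b
              have h2 := Set.mem_iInter.mp this (Finset.mem_filter.mpr ⟨hb, hgt⟩)
              exact h2 hvb.1.1.1
          rw [Finset.sum_eq_single_of_mem j0 hj0 hz, Set.indicator_of_mem hvj0]
          exact hpoint j0 hj0 v hvj0
        · push_neg at hex
          have hz : ∀ j ∈ S, (Gs j).indicator (fun _ => p j) v = 0 :=
            fun j hj => Set.indicator_of_notMem (hex j hj) _
          rw [Finset.sum_congr rfl hz, Finset.sum_const_zero]
          exact zero_le
      have hGsum : ∑ j ∈ S, p j * F (Gs j) ≤ expRev B p F := by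
        calc ∑ j ∈ S, p j * F (Gs j)
            = ∑ j ∈ S, ∫⁻ v, (Gs j).indicator (fun _ => p j) v ∂F := by
              refine Finset.sum_congr rfl fun j hj => ?_
              rw [lintegral_indicator (hGm j) (fun _ => p j), setLIntegral_const]
          _ = ∫⁻ v, ∑ j ∈ S, (Gs j).indicator (fun _ => p j) v ∂F :=
              (lintegral_finset_sum _ (fun j _ => measurable_const.indicator (hGm j))).symm
          _ ≤ ∫⁻ v, B.revenue p v ∂F := lintegral_mono hfun
          _ = expRev B p F := rfl
      -- combine
      calc ENNReal.ofReal ((1 / 2) * (1 - Real.sqrt n / 2 ^ (n - 1)) * S.card)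
          = ∑ _j ∈ S, ENNReal.ofReal ((1/2 : ℝ) * (1 - s / 2^(n-1))) := by
            rw [ENNReal.ofReal_mul (t_nonneg n hn), ENNReal.ofReal_natCast S.card,
              Finset.sum_const, nsmul_eq_mul, mul_comm]
        _ ≤ ∑ j ∈ S, p j * F (Gs j) := Finset.sum_le_sum hkey
        _ ≤ expRev B p F := hGsum
  refine ⟨main, ?_⟩
  have h1 : ENNReal.ofReal ((1 / 2) * (1 - Real.sqrt n / 2 ^ (n - 1)) * S.card) ≤
      robustRev B (margG n G) p :=
    le_iInf fun F => le_iInf fun hF => main F hF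
  exact h1.trans (le_iSup (fun q => robustRev B (margG n G) q) p)
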